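/- Let K be a finite field, let F be a finite-dimensional K-vector space with a nondegenerate symmetric K-bilinear form ⟨·,·⟩ (e.g., the dot product with respect to a fixed basis), and let (L_m)_{m ∈ F} be a family of K-linear endomorphisms of F, indexed by the elements of F, such that L_m − L_{m'} is injective whenever m ≠ m'. For each m let L_mᵗ denote the adjoint of L_m with respect to the form, i.e., ⟨b, L_m x⟩ = ⟨L_mᵗ b, x⟩ for all b, x ∈ F. Then for every b ∈ F with b ≠ 0, the map F → F given by m ↦ L_mᵗ(b) is a bijection. -/

import Mathlib

/-- If `(L_m)_{m ∈ F}` is a family of linear endomorphisms of a finite-dimensional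
vector space `F` over a finite field `K` such that `L_m - L_{m'}` is injective for
`m ≠ m'`, and `L_mᵗ` denotes the adjoint with respect to a nondegenerate symmetric
bilinear form, then for `b ≠ 0` the map `m ↦ L_mᵗ b` is a bijection. -/
theorem bijective_transpose_eval {K F : Type*} [Field K] [Fintype K]
    [AddCommGroup F] [Module K F] [FiniteDimensional K F]
    (B : LinearMap.BilinForm K F) (hBsymm : ∀ x y : F, B x y = B y x)
    (hBnd : B.Nondegenerate)
    (L : F → F →ₗ[K] F)
    (hL : ∀ m m' : F, m ≠ m' → Function.Injective ⇑(L m - L m'))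
    (Lt : F → F →ₗ[K] F)
    (hLt : ∀ m b x : F, B b (L m x) = B (Lt m b) x) :
    ∀ b : F, b ≠ 0 → Function.Bijective (fun m : F => Lt m b) := by
  intro b hb
  have hfin : Finite F := Module.finite_of_finite K
  rw [← Finite.injective_iff_bijective]
  intro m m' h
  by_contra hne
  have hsurj : Function.Surjective ⇑(L m - L m') :=
    (LinearMap.injective_iff_surjective).mp (hL m m' hne)
  apply hb
  apply hBnd.1
  intro y
  obtain ⟨x, rfl⟩ := hsurj y
  have : B b ((L m - L m') x) = B (Lt m b) x - B (Lt m' b) x := by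
    simp [map_sub, hLt]
  rw [this]
  simp only at h
  rw [h, sub_self]
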